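/- For all natural numbers r ≥ 1 and 0 ≤ j ≤ r, the polynomial α η_j ψ_{r−j} ζ_{r−j} lies in the ideal J_r of ℂ[α,β,γ]. -/

import Mathlib

open MvPolynomial

/-- ζ_k ∈ ℂ[α,β,γ] (variables: X 0 = α, X 1 = β, X 2 = γ). -/
noncomputable def zeta : ℕ → MvPolynomial (Fin 3) ℂ
  | 0 => 1
  | 1 => X 0
  | 2 => X 0 * zeta 1 + (X 1 - C 8) * zeta 0
  | (n + 3) =>
      X 0 * zeta (n + 2)
        + C (((n : ℂ) + 2) ^ 2) * (X 1 + C ((-1) ^ (n + 2) * 8)) * zeta (n + 1)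
        + C (2 * ((n : ℂ) + 2) * ((n : ℂ) + 1)) * X 2 * zeta n

/-- J_g = (ζ_g, ζ_{g+1}, ζ_{g+2}) ⊆ ℂ[α,β,γ]. -/
noncomputable def J (g : ℕ) : Ideal (MvPolynomial (Fin 3) ℂ) :=
  Ideal.span {zeta g, zeta (g + 1), zeta (g + 2)}

/-- β₋ = β − 8. -/
noncomputable def betaM : MvPolynomial (Fin 3) ℂ := X 1 - C 8

/-- β₊ = β + 8. -/
noncomputable def betaP : MvPolynomial (Fin 3) ℂ := X 1 + C 8

/-- ψ_r = β₋^{⌊r/2⌋} β₊^{⌈r/2⌉}. -/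
noncomputable def psi (r : ℕ) : MvPolynomial (Fin 3) ℂ :=
  betaM ^ (r / 2) * betaP ^ ((r + 1) / 2)

/-- η_j = β₋^{j−1} β₊^{j−1} for j ≥ 1 (so η_1 = 1), and η_0 = 1. -/
noncomputable def eta : ℕ → MvPolynomial (Fin 3) ℂ
  | 0 => 1
  | (m + 1) => betaM ^ m * betaP ^ m

/- ### Auxiliary machinery -/

/-- B_k = β + (−1)^{k+1}·8, the β-coefficient appearing in the recurrence. -/
noncomputable def Bf (k : ℕ) : MvPolynomial (Fin 3) ℂ := X 1 + C ((-1) ^ (k + 1) * 8)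

lemma Bf_zero : Bf 0 = betaM := by
  unfold Bf betaM
  rw [show ((-1 : ℂ)) ^ (0 + 1) * 8 = -8 by norm_num, map_neg]
  ring

lemma Bf_add_two (k : ℕ) : Bf (k + 2) = Bf k := by
  unfold Bf
  congr 2
  rw [show k + 2 + 1 = (k + 1) + 2 by ring, pow_add]
  ring

lemma Bf_mul_Bf (k : ℕ) : Bf k * Bf (k + 1) = betaM * betaP := by
  unfold Bf betaM betaP
  rcases Nat.even_or_odd k with hk | hk
  · rw [show ((-1 : ℂ)) ^ (k + 1) = -1 from Odd.neg_one_pow hk.add_one,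
      show ((-1 : ℂ)) ^ (k + 1 + 1) = 1 from Even.neg_one_pow (hk.add_one.add_one),
      show ((-1 : ℂ)) * 8 = -8 by norm_num, show ((1 : ℂ)) * 8 = 8 by norm_num, map_neg]
    ring
  · rw [show ((-1 : ℂ)) ^ (k + 1) = 1 from Even.neg_one_pow hk.add_one,
      show ((-1 : ℂ)) ^ (k + 1 + 1) = -1 from Odd.neg_one_pow (hk.add_one.add_one),
      show ((-1 : ℂ)) * 8 = -8 by norm_num, show ((1 : ℂ)) * 8 = 8 by norm_num, map_neg]
    ring

lemma psi_zero : psi 0 = 1 := by simp [psi]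

lemma psi_one : psi 1 = betaP := by simp [psi]

lemma eta_zero : eta 0 = 1 := rfl

lemma eta_one : eta 1 = 1 := by simp [eta]

lemma eta_succ (q : ℕ) : eta (q + 2) = betaM * betaP * eta (q + 1) := by
  show betaM ^ (q + 1) * betaP ^ (q + 1) = betaM * betaP * (betaM ^ q * betaP ^ q)
  rw [pow_succ, pow_succ]; ring

lemma psi_succ (m : ℕ) : psi (m + 1) = Bf (m + 1) * psi m := by
  rcases Nat.even_or_odd m with ⟨k, hk⟩ | ⟨k, hk⟩
  · subst hk
    have hB : Bf (k + k + 1) = betaP := by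
      unfold Bf betaP
      congr 1
      rw [show k + k + 1 + 1 = 2 * (k + 1) by ring]
      rw [Even.neg_one_pow ⟨k + 1, by ring⟩, one_mul]
    rw [hB]
    unfold psi
    have e1 : (k + k + 1) / 2 = k := by omega
    have e2 : (k + k + 1 + 1) / 2 = k + 1 := by omega
    have e3 : (k + k) / 2 = k := by omega
    rw [e1, e2, e3, pow_succ]
    ring
  · subst hk
    have hB : Bf (2 * k + 1 + 1) = betaM := by
      unfold Bf
      rw [show 2 * k + 1 + 1 + 1 = 2 * (k + 1) + 1 by ring]
      rw [Odd.neg_one_pow ⟨k + 1, by ring⟩]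
      rw [betaM, show ((-1 : ℂ)) * 8 = -8 by ring, map_neg, sub_eq_add_neg]
    rw [hB]
    unfold psi
    have e1 : (2 * k + 1 + 1) / 2 = k + 1 := by omega
    have e2 : (2 * k + 1 + 1 + 1) / 2 = k + 1 := by omega
    have e3 : (2 * k + 1) / 2 = k := by omega
    rw [e1, e2, e3, pow_succ]
    ring

/-- eta (q+2) * psi m = eta (q+1) * psi (m+2). -/
lemma eta_psi (q m : ℕ) : eta (q + 2) * psi m = eta (q + 1) * psi (m + 2) := by
  rw [eta_succ, psi_succ, psi_succ]
  rw [show Bf (m + 2) * (Bf (m + 1) * psi m) = Bf (m + 1) * Bf (m + 2) * psi m by ring]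
  rw [Bf_mul_Bf]
  ring

/-- eta (q+2) * psi m = Bf (m+2) * (eta (q+1) * psi (m+1)). -/
lemma eta_psi_odd (q m : ℕ) : eta (q + 2) * psi m = Bf (m + 2) * (eta (q + 1) * psi (m + 1)) := by
  rw [eta_succ, psi_succ]
  rw [show Bf (m + 2) * (eta (q + 1) * (Bf (m + 1) * psi m))
      = Bf (m + 1) * Bf (m + 2) * (eta (q + 1) * psi m) by ring]
  rw [Bf_mul_Bf]
  ring

/-- The uniform recurrence. -/
lemma zeta_rec (n : ℕ) :
    zeta (n + 3) = X 0 * zeta (n + 2) + C (((n : ℂ) + 2) ^ 2) * Bf (n + 1) * zeta (n + 1)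
      + C (2 * ((n : ℂ) + 2) * ((n : ℂ) + 1)) * X 2 * zeta n := rfl

lemma zeta_two : zeta 2 = X 0 * zeta 1 + Bf 0 * zeta 0 := by
  rw [Bf_zero]; rfl

lemma zeta_zero : zeta 0 = 1 := rfl

lemma zeta_one : zeta 1 = X 0 := rfl

lemma memJ_self (r : ℕ) : zeta r ∈ J r :=
  Ideal.subset_span (by simp)

lemma memJ_one (r : ℕ) : zeta (r + 1) ∈ J r :=
  Ideal.subset_span (by simp)

lemma memJ_two (r : ℕ) : zeta (r + 2) ∈ J r :=
  Ideal.subset_span (by simp)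

lemma cancel_C {c : ℂ} (hc : c ≠ 0) {p : MvPolynomial (Fin 3) ℂ} {I : Ideal (MvPolynomial (Fin 3) ℂ)}
    (h : C c * p ∈ I) : p ∈ I := by
  have h2 := I.mul_mem_left (C c⁻¹) h
  rwa [← mul_assoc, ← C_mul, inv_mul_cancel₀ hc, C_1, one_mul] at h2

lemma cast_ne (m : ℕ) : ((m : ℂ) + 2) ≠ 0 := by
  have : ((m : ℂ) + 2) = ((m + 2 : ℕ) : ℂ) := by push_cast; ring
  rw [this]
  exact Nat.cast_ne_zero.mpr (by omega)

/-- Z family: γ^s ζ_{r-s} ∈ J_r. -/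
lemma Zmem (r : ℕ) : ∀ s m : ℕ, m + s = r → (X 2 : MvPolynomial (Fin 3) ℂ) ^ s * zeta m ∈ J r := by
  intro s
  induction s using Nat.strong_induction_on with
  | _ s ih =>
    intro m hm
    match s with
    | 0 =>
      have hz : zeta m ∈ J r := by rw [show m = r by omega]; exact memJ_self r
      simpa using (J r).mul_mem_left 1 hz
    | s + 1 =>
      -- use the recurrence producing ζ_{m+3} = ζ_{r-s+2}
      have key : C (2 * ((m : ℂ) + 2) * ((m : ℂ) + 1)) * ((X 2 : MvPolynomial (Fin 3) ℂ) ^ (s + 1) * zeta m)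
          = X 2 ^ s * zeta (m + 3) - X 0 * (X 2 ^ s * zeta (m + 2))
            - (C (((m : ℂ) + 2) ^ 2) * Bf (m + 1)) * (X 2 ^ s * zeta (m + 1)) := by
        rw [zeta_rec m, pow_succ]
        ring
      have h1 : (X 2 : MvPolynomial (Fin 3) ℂ) ^ s * zeta (m + 3) ∈ J r := by
        clear key
        match s with
        | 0 =>
          have hz : zeta (m + 3) ∈ J r := by
            rw [show m + 3 = r + 2 by omega]; exact memJ_two r
          simpa using (J r).mul_mem_left 1 hz
        | 1 =>
          have hz : zeta (m + 3) ∈ J r := by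
            rw [show m + 3 = r + 1 by omega]; exact memJ_one r
          have := (J r).mul_mem_left (X 2) hz
          simpa [pow_one] using this
        | s + 2 =>
          have := ih s (by omega) (m + 3) (by omega)
          have h2 := (J r).mul_mem_left ((X 2 : MvPolynomial (Fin 3) ℂ) ^ 2) this
          rw [show (X 2 : MvPolynomial (Fin 3) ℂ) ^ (s + 2) * zeta (m + 3)
              = X 2 ^ 2 * (X 2 ^ s * zeta (m + 3)) by rw [pow_add]; ring]
          exact h2
      have h2 : (X 0 : MvPolynomial (Fin 3) ℂ) * (X 2 ^ s * zeta (m + 2)) ∈ J r := by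
        clear key h1
        match s with
        | 0 =>
          have hz : zeta (m + 2) ∈ J r := by
            rw [show m + 2 = r + 1 by omega]; exact memJ_one r
          have hz2 : (X 2 : MvPolynomial (Fin 3) ℂ) ^ 0 * zeta (m + 2) ∈ J r := by simpa using hz
          exact (J r).mul_mem_left _ hz2
        | s + 1 =>
          have := ih s (by omega) (m + 2) (by omega)
          have h3 := (J r).mul_mem_left ((X 0 : MvPolynomial (Fin 3) ℂ) * X 2) this
          rw [show (X 0 : MvPolynomial (Fin 3) ℂ) * (X 2 ^ (s + 1) * zeta (m + 2))
              = X 0 * X 2 * (X 2 ^ s * zeta (m + 2)) by rw [pow_succ]; ring]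
          exact h3
      have h3 : (C (((m : ℂ) + 2) ^ 2) * Bf (m + 1)) * ((X 2 : MvPolynomial (Fin 3) ℂ) ^ s * zeta (m + 1)) ∈ J r :=
        (J r).mul_mem_left _ (ih s (by omega) (m + 1) (by omega))
      have hmem : C (2 * ((m : ℂ) + 2) * ((m : ℂ) + 1)) * ((X 2 : MvPolynomial (Fin 3) ℂ) ^ (s + 1) * zeta m) ∈ J r := by
        rw [key]; exact sub_mem (sub_mem h1 h2) h3
      exact cancel_C (by
        have hm2 := cast_ne m
        have hm1 : ((m : ℂ) + 1) ≠ 0 := by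
          have : ((m : ℂ) + 1) = ((m + 1 : ℕ) : ℂ) := by push_cast; ring
          rw [this]; exact Nat.cast_ne_zero.mpr (by omega)
        exact mul_ne_zero (mul_ne_zero two_ne_zero hm2) hm1) hmem

/-- Y family: α γ^s η_q ψ_m ζ_m ∈ J_r whenever q + m + s = r. -/
lemma Ymem (r : ℕ) : ∀ q m s : ℕ, q + (m + s) = r →
    X 0 * (X 2 : MvPolynomial (Fin 3) ℂ) ^ s * eta q * psi m * zeta m ∈ J r := by
  intro q
  induction q using Nat.strong_induction_on with
  | _ q ihq =>
    intro m
    induction m using Nat.strong_induction_on with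
    | _ m ihm =>
      intro s hqs
      match q, m with
      | 0, m =>
        -- coefficient multiple of Z(s)
        have hz := Zmem r s m (by omega)
        have := (J r).mul_mem_left (X 0 * psi m) hz
        rw [show X 0 * (X 2 : MvPolynomial (Fin 3) ℂ) ^ s * eta 0 * psi m * zeta m
            = X 0 * psi m * (X 2 ^ s * zeta m) by rw [eta_zero]; ring]
        exact this
      | 1, 0 =>
        -- target is exactly X0 * γ^{r-1} = γ^{r-1} ζ_1 : Z(r-1)
        have hz := Zmem r s 1 (by omega)
        rw [show X 0 * (X 2 : MvPolynomial (Fin 3) ℂ) ^ s * eta 1 * psi 0 * zeta 0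
            = X 2 ^ s * zeta 1 by rw [eta_one, psi_zero, zeta_zero, zeta_one]; ring]
        exact hz
      | q + 2, 0 =>
        -- m = 0, q' = q+2 ≥ 2: use ζ_2 = X0 ζ_1 + Bf 0 ζ_0
        -- eta (q+2) * psi 0 = Bf 2 * (eta (q+1) * psi 1), and Bf 2 = Bf 0
        have key : X 0 * (X 2 : MvPolynomial (Fin 3) ℂ) ^ s * eta (q + 2) * psi 0 * zeta 0
            = (X 0 * X 2 ^ s * (eta (q + 1) * psi 1)) * zeta 2
              - X 0 * (X 0 * X 2 ^ s * eta (q + 1) * psi 1 * zeta 1) := by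
          have h0 : Bf 0 * zeta 0 = zeta 2 - X 0 * zeta 1 := by rw [zeta_two]; ring
          calc X 0 * (X 2 : MvPolynomial (Fin 3) ℂ) ^ s * eta (q + 2) * psi 0 * zeta 0
              = X 0 * X 2 ^ s * (eta (q + 2) * psi 0) * zeta 0 := by ring
            _ = X 0 * X 2 ^ s * (Bf 2 * (eta (q + 1) * psi 1)) * zeta 0 := by rw [eta_psi_odd q 0]
            _ = X 0 * X 2 ^ s * (Bf 0 * (eta (q + 1) * psi 1)) * zeta 0 := by rw [Bf_add_two]
            _ = X 0 * X 2 ^ s * (eta (q + 1) * psi 1) * (Bf 0 * zeta 0) := by ring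
            _ = X 0 * X 2 ^ s * (eta (q + 1) * psi 1) * (zeta 2 - X 0 * zeta 1) := by rw [h0]
            _ = _ := by ring
        rw [key]
        have h2 : X 0 * (X 0 * (X 2 : MvPolynomial (Fin 3) ℂ) ^ s * eta (q + 1) * psi 1 * zeta 1) ∈ J r :=
          (J r).mul_mem_left _ (ihq (q + 1) (by omega) 1 s (by omega))
        have h1 : (X 0 * (X 2 : MvPolynomial (Fin 3) ℂ) ^ s * (eta (q + 1) * psi 1)) * zeta 2 ∈ J r := by
          clear key h2
          match q with
          | 0 =>
            -- 2 + s = r : Z(s)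
            have hz := Zmem r s 2 (by omega)
            have := (J r).mul_mem_left (X 0 * (eta 1 * psi 1)) hz
            rw [show (X 0 * (X 2 : MvPolynomial (Fin 3) ℂ) ^ s * (eta 1 * psi 1)) * zeta 2
                = X 0 * (eta 1 * psi 1) * (X 2 ^ s * zeta 2) by ring]
            exact this
          | q + 1 =>
            -- eta (q+2) * psi 1 = Bf 3 * (eta (q+1) * psi 2)
            have hy := ihq (q + 1) (by omega) 2 s (by omega)
            have := (J r).mul_mem_left (Bf 3) hy
            rw [show (X 0 * (X 2 : MvPolynomial (Fin 3) ℂ) ^ s * (eta (q + 2) * psi 1)) * zeta 2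
                = Bf 3 * (X 0 * X 2 ^ s * eta (q + 1) * psi 2 * zeta 2) by
              rw [eta_psi_odd q 1]; ring]
            exact this
        exact sub_mem h1 h2
      | q + 1, m + 1 =>
        -- main case
        have key : C (((m : ℂ) + 2) ^ 2) * (X 0 * (X 2 : MvPolynomial (Fin 3) ℂ) ^ s * eta (q + 1) * psi (m + 1) * zeta (m + 1))
            = (X 0 * X 2 ^ s * (eta (q + 1) * psi m)) * zeta (m + 3)
              - X 0 * (X 0 * X 2 ^ s * (eta (q + 1) * psi m) * zeta (m + 2))
              - C (2 * ((m : ℂ) + 2) * ((m : ℂ) + 1)) * (X 0 * X 2 ^ (s + 1) * eta (q + 1) * psi m * zeta m) := by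
          rw [psi_succ m, zeta_rec m, pow_succ]
          ring
        have h3 : C (2 * ((m : ℂ) + 2) * ((m : ℂ) + 1)) * (X 0 * (X 2 : MvPolynomial (Fin 3) ℂ) ^ (s + 1) * eta (q + 1) * psi m * zeta m) ∈ J r :=
          (J r).mul_mem_left _ (ihm m (by omega) (s + 1) (by omega))
        have h2 : X 0 * (X 0 * (X 2 : MvPolynomial (Fin 3) ℂ) ^ s * (eta (q + 1) * psi m) * zeta (m + 2)) ∈ J r := by
          clear key h3
          match q with
          | 0 =>
            -- m + 2 + s = r : Z(s)
            have hz := Zmem r s (m + 2) (by omega)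
            have := (J r).mul_mem_left (X 0 * (X 0 * (eta 1 * psi m))) hz
            rw [show X 0 * (X 0 * (X 2 : MvPolynomial (Fin 3) ℂ) ^ s * (eta 1 * psi m) * zeta (m + 2))
                = X 0 * (X 0 * (eta 1 * psi m)) * (X 2 ^ s * zeta (m + 2)) by ring]
            exact this
          | q + 1 =>
            have hy := ihq (q + 1) (by omega) (m + 2) s (by omega)
            have := (J r).mul_mem_left (X 0) hy
            rw [show X 0 * (X 0 * (X 2 : MvPolynomial (Fin 3) ℂ) ^ s * (eta (q + 2) * psi m) * zeta (m + 2))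
                = X 0 * (X 0 * X 2 ^ s * eta (q + 1) * psi (m + 2) * zeta (m + 2)) by
              rw [eta_psi q m]; ring]
            exact this
        have h1 : (X 0 * (X 2 : MvPolynomial (Fin 3) ℂ) ^ s * (eta (q + 1) * psi m)) * zeta (m + 3) ∈ J r := by
          clear key h3 h2
          match q with
          | 0 =>
            -- m + 3 + s = r + 1
            match s with
            | 0 =>
              -- ζ_{r+1} generator
              have hz : zeta (m + 3) ∈ J r := by
                rw [show m + 3 = r + 1 by omega]; exact memJ_one r
              exact (J r).mul_mem_left _ hz
            | s + 1 =>
              -- γ^{s+1} ζ_{m+3} with (m+3) + s = r : Z(s)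
              have hz := Zmem r s (m + 3) (by omega)
              have := (J r).mul_mem_left (X 0 * X 2 * (eta 1 * psi m)) hz
              rw [show (X 0 * (X 2 : MvPolynomial (Fin 3) ℂ) ^ (s + 1) * (eta 1 * psi m)) * zeta (m + 3)
                  = X 0 * X 2 * (eta 1 * psi m) * (X 2 ^ s * zeta (m + 3)) by rw [pow_succ]; ring]
              exact this
          | 1 =>
            -- q' = 2 : m + 3 + s = r : Z(s)
            have hz := Zmem r s (m + 3) (by omega)
            have := (J r).mul_mem_left (X 0 * (eta 2 * psi m)) hz
            rw [show (X 0 * (X 2 : MvPolynomial (Fin 3) ℂ) ^ s * (eta 2 * psi m)) * zeta (m + 3)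
                = X 0 * (eta 2 * psi m) * (X 2 ^ s * zeta (m + 3)) by ring]
            exact this
          | q + 2 =>
            -- eta (q+3) * psi m = Bf (m+2) * (eta (q+2) * psi (m+1))
            --                  = Bf (m+2) * (eta (q+1) * psi (m+3))
            have hy := ihq (q + 1) (by omega) (m + 3) s (by omega)
            have := (J r).mul_mem_left (Bf (m + 2)) hy
            rw [show (X 0 * (X 2 : MvPolynomial (Fin 3) ℂ) ^ s * (eta (q + 3) * psi m)) * zeta (m + 3)
                = Bf (m + 2) * (X 0 * X 2 ^ s * eta (q + 1) * psi (m + 3) * zeta (m + 3)) by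
              rw [show q + 3 = (q + 1) + 2 by ring, eta_psi_odd (q + 1) m, eta_psi q (m + 1)]
              ring]
            exact this
        have hmem : C (((m : ℂ) + 2) ^ 2) * (X 0 * (X 2 : MvPolynomial (Fin 3) ℂ) ^ s * eta (q + 1) * psi (m + 1) * zeta (m + 1)) ∈ J r := by
          rw [key]; exact sub_mem (sub_mem h1 h2) h3
        exact cancel_C (pow_ne_zero _ (cast_ne m)) hmem

/-- For all r ≥ 1 and 0 ≤ j ≤ r, α η_j ψ_{r−j} ζ_{r−j} ∈ J_r. -/
theorem alpha_eta_psi_zeta_mem (r j : ℕ) (hr : 1 ≤ r) (hj : j ≤ r) :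
    X 0 * eta j * psi (r - j) * zeta (r - j) ∈ J r := by
  have := Ymem r j (r - j) 0 (by omega)
  simpa using this
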